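/- Let λ > 0, X ∈ ℝ^{n×p}, 2 ≤ r ≤ p, and weights w_{ℓm} > 0. Suppose β̂ with β̂_r > 0 is a minimizer of the r-th row subproblem with dual vectors (a^{(ℓ)}) satisfying the optimality (KKT) conditions and the strict dual feasibility ‖(a^{(ℓ)})_{g_ℓ}‖₂ < 1 for all ℓ = 1,…,J(β̂), where J(β̂) is the largest ℓ with β̂_1 = ⋯ = β̂_ℓ = 0. Let Ŝ = {i ∈ {1,…,r} : β̂_i ≠ 0}. If the submatrix X_Ŝ of X_{1:r} consisting of the columns indexed by Ŝ has full column rank |Ŝ|, then β̂ is the unique minimizer of the r-th row subproblem. -/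

import Mathlib

open Matrix Finset
open scoped InnerProductSpace



private lemma logAM {a b : ℝ} (ha : 0 < a) (hb : 0 < b) :
    Real.log a + Real.log b ≤ 2 * Real.log ((a + b) / 2) := by
  have hs : Real.sqrt (a * b) = Real.sqrt a * Real.sqrt b := Real.sqrt_mul ha.le b
  have h1 : Real.sqrt (a * b) ≤ (a + b) / 2 := by
    nlinarith [sq_nonneg (Real.sqrt a - Real.sqrt b), Real.sq_sqrt ha.le, Real.sq_sqrt hb.le]
  have h2 : Real.log a + Real.log b = 2 * Real.log (Real.sqrt (a * b)) := by
    rw [Real.log_sqrt (by positivity)]; rw [Real.log_mul ha.ne' hb.ne']; ring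
  have h3 : Real.log (Real.sqrt (a * b)) ≤ Real.log ((a + b) / 2) :=
    Real.log_le_log (by positivity) h1
  linarith

private lemma logAM_strict {a b : ℝ} (ha : 0 < a) (hb : 0 < b) (hne : a ≠ b) :
    Real.log a + Real.log b < 2 * Real.log ((a + b) / 2) := by
  have hs : Real.sqrt (a * b) = Real.sqrt a * Real.sqrt b := Real.sqrt_mul ha.le b
  have hsa : Real.sqrt a ≠ Real.sqrt b := by
    intro h
    exact hne (by
      have := congrArg (· ^ 2) h
      simpa [Real.sq_sqrt ha.le, Real.sq_sqrt hb.le] using this)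
  have h0 : (Real.sqrt a - Real.sqrt b) ^ 2 ≠ 0 := pow_ne_zero 2 (sub_ne_zero.mpr hsa)
  have hpos : 0 < (Real.sqrt a - Real.sqrt b) ^ 2 := (sq_nonneg _).lt_of_ne (Ne.symm h0)
  have h1 : Real.sqrt (a * b) < (a + b) / 2 := by
    nlinarith [Real.sq_sqrt ha.le, Real.sq_sqrt hb.le]
  have h2 : Real.log a + Real.log b = 2 * Real.log (Real.sqrt (a * b)) := by
    rw [Real.log_sqrt (by positivity)]; rw [Real.log_mul ha.ne' hb.ne']; ring
  have h3 : Real.log (Real.sqrt (a * b)) < Real.log ((a + b) / 2) :=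
    Real.log_lt_log (by positivity) h1
  linarith


set_option maxHeartbeats 4000000 in
/-- Lemma `theory:uniqueness`: under the KKT conditions with strict dual
feasibility on the leading zero groups of `β̂`, if the columns of `X_{1:r}` indexed by the
support `Ŝ = {i : β̂ i ≠ 0}` are linearly independent (full column rank), then `β̂` is the
unique minimizer of the `r`-th row subproblem. -/
theorem stmt_9 (n p r : ℕ) (hr2 : 2 ≤ r) (hrp : r ≤ p)
    (X : Matrix (Fin n) (Fin p) ℝ) (lam : ℝ) (hlam : 0 < lam)
    (w : ℕ → ℕ → ℝ) (hw : ∀ ℓ m : ℕ, m ≤ ℓ → ℓ < r - 1 → 0 < w ℓ m)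
    (Xr : Matrix (Fin n) (Fin r) ℝ) (hXr : ∀ i j, Xr i j = X i (Fin.castLE hrp j))
    (F : (Fin r → ℝ) → ℝ)
    (hF : ∀ β : Fin r → ℝ,
      F β = -2 * Real.log (β ⟨r - 1, by omega⟩)
        + (1 / (n : ℝ)) * ∑ i : Fin n, (Xr.mulVec β i) ^ 2
        + lam * ∑ ℓ ∈ Finset.range (r - 1),
            Real.sqrt (∑ m ∈ Finset.univ.filter (fun m : Fin r => (m : ℕ) ≤ ℓ),
              w ℓ (m : ℕ) ^ 2 * β m ^ 2))
    (βh : Fin r → ℝ) (hβpos : 0 < βh ⟨r - 1, by omega⟩)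
    (hmin : ∀ β : Fin r → ℝ, 0 < β ⟨r - 1, by omega⟩ → F βh ≤ F β)
    (a : ℕ → Fin r → ℝ)
    -- KKT conditions for (β̂, a):
    (hstat : ∀ j : Fin r,
      -(2 / βh ⟨r - 1, by omega⟩) * (if j = (⟨r - 1, by omega⟩ : Fin r) then 1 else 0)
        + (2 / (n : ℝ)) * ((Xrᵀ * Xr).mulVec βh j)
        + lam * ∑ ℓ ∈ Finset.range (r - 1),
            (if (j : ℕ) ≤ ℓ then w ℓ (j : ℕ) else 0) * a ℓ j = 0)
    (hasupp : ∀ ℓ, ℓ < r - 1 → ∀ m : Fin r, ℓ < (m : ℕ) → a ℓ m = 0)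
    (hagrad : ∀ ℓ, ℓ < r - 1 → (¬ ∀ m : Fin r, (m : ℕ) ≤ ℓ → βh m = 0) →
      ∀ m : Fin r, (m : ℕ) ≤ ℓ →
        a ℓ m = w ℓ (m : ℕ) * βh m /
          Real.sqrt (∑ m' ∈ Finset.univ.filter (fun m' : Fin r => (m' : ℕ) ≤ ℓ),
            (w ℓ (m' : ℕ) * βh m') ^ 2))
    (hafeas : ∀ ℓ, ℓ < r - 1 → (∀ m : Fin r, (m : ℕ) ≤ ℓ → βh m = 0) →
      Real.sqrt (∑ m ∈ Finset.univ.filter (fun m : Fin r => (m : ℕ) ≤ ℓ), a ℓ m ^ 2) ≤ 1)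
    -- J = J(β̂), the length of the leading zero block of β̂:
    (J : ℕ) (hJle : J ≤ r - 1)
    (hJzero : ∀ m : Fin r, (m : ℕ) < J → βh m = 0)
    (hJmax : ∀ h : J < r - 1, βh ⟨J, by omega⟩ ≠ 0)
    -- strict dual feasibility on the zero groups:
    (hstrict : ∀ ℓ, ℓ < J →
      Real.sqrt (∑ m ∈ Finset.univ.filter (fun m : Fin r => (m : ℕ) ≤ ℓ), a ℓ m ^ 2) < 1)
    -- the columns of X_{1:r} indexed by the support of β̂ have full column rank:
    (hrank : LinearIndependent ℝ
      (fun j : {j : Fin r // βh j ≠ 0} => fun i : Fin n => Xr i j.1)) :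
    ∀ βt : Fin r → ℝ, 0 < βt ⟨r - 1, by omega⟩ →
      (∀ β : Fin r → ℝ, 0 < β ⟨r - 1, by omega⟩ → F βt ≤ F β) →
      βt = βh := by
  intro βt hβt hmin'
  set rm1 : Fin r := ⟨r - 1, by omega⟩ with hrm1
  set V : (Fin r → ℝ) → ℕ → EuclideanSpace ℝ (Fin r) :=
    fun β ℓ => WithLp.toLp 2 (fun m : Fin r => if (m : ℕ) ≤ ℓ then w ℓ (m : ℕ) * β m else 0) with hV
  set A' : ℕ → EuclideanSpace ℝ (Fin r) :=
    fun ℓ => WithLp.toLp 2 (fun m : Fin r => if (m : ℕ) ≤ ℓ then a ℓ m else 0) with hA'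
  set d : Fin r → ℝ := fun j => βt j - βh j with hd
  set βm : Fin r → ℝ := fun j => (βt j + βh j) / 2 with hβmdef
  -- norm bridges
  have hVnorm : ∀ (β : Fin r → ℝ) (ℓ : ℕ),
      Real.sqrt (∑ m ∈ Finset.univ.filter (fun m : Fin r => (m : ℕ) ≤ ℓ),
        (w ℓ (m : ℕ) * β m) ^ 2) = ‖V β ℓ‖ := by
    intro β ℓ
    rw [EuclideanSpace.norm_eq]
    congr 1
    rw [Finset.sum_filter]
    refine Finset.sum_congr rfl fun m _ => ?_
    by_cases h : (m : ℕ) ≤ ℓ <;> simp [hV, h, Real.norm_eq_abs, sq_abs]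
    rw [← abs_mul, sq_abs]
  have hA'norm : ∀ ℓ : ℕ,
      Real.sqrt (∑ m ∈ Finset.univ.filter (fun m : Fin r => (m : ℕ) ≤ ℓ), a ℓ m ^ 2)
        = ‖A' ℓ‖ := by
    intro ℓ
    rw [EuclideanSpace.norm_eq]
    congr 1
    rw [Finset.sum_filter]
    refine Finset.sum_congr rfl fun m _ => ?_
    by_cases h : (m : ℕ) ≤ ℓ <;> simp [hA', h, Real.norm_eq_abs, sq_abs]
  have hinner : ∀ x y : EuclideanSpace ℝ (Fin r), ⟪x, y⟫_ℝ = ∑ m : Fin r, x m * y m := by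
    intro x y
    simp [PiLp.inner_apply, RCLike.inner_apply, conj_trivial, mul_comm]
  -- F rewritten
  have hF' : ∀ β : Fin r → ℝ,
      F β = -2 * Real.log (β rm1) + (1 / (n : ℝ)) * ∑ i : Fin n, (Xr.mulVec β i) ^ 2
        + lam * ∑ ℓ ∈ Finset.range (r - 1), ‖V β ℓ‖ := by
    intro β
    rw [hF β]
    congr 1
    rw [mul_eq_mul_left_iff]
    left
    refine Finset.sum_congr rfl fun ℓ _ => ?_
    rw [← hVnorm β ℓ]
    congr 1
    exact Finset.sum_congr rfl fun m _ => by rw [mul_pow]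
  have hβmr : βm rm1 = (βt rm1 + βh rm1) / 2 := rfl
  have hβm : 0 < βm rm1 := by rw [hβmr]; linarith
  have hFeq : F βt = F βh := le_antisymm (hmin' βh hβpos) (hmin βt hβt)
  have hFm : F βh ≤ F βm := hmin βm hβm
  have hVmid : ∀ ℓ : ℕ, V βm ℓ = (2⁻¹ : ℝ) • (V βt ℓ + V βh ℓ) := by
    intro ℓ
    ext m
    have h0 : ((2⁻¹ : ℝ) • (V βt ℓ + V βh ℓ)) m = 2⁻¹ * (V βt ℓ m + V βh ℓ m) := rfl
    rw [h0]
    by_cases h : (m : ℕ) ≤ ℓ <;> simp [hV, h, hβmdef] <;> ring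
  have hCnonneg : ∀ ℓ : ℕ, 0 ≤ ‖V βt ℓ‖ + ‖V βh ℓ‖ - 2 * ‖V βm ℓ‖ := by
    intro ℓ
    rw [hVmid ℓ, norm_smul]
    have h1 := norm_add_le (V βt ℓ) (V βh ℓ)
    rw [show ‖(2⁻¹:ℝ)‖ = 2⁻¹ by simp [Real.norm_eq_abs]]
    linarith
  have hβmv : βm = (2⁻¹ : ℝ) • (βt + βh) := by
    funext j
    simp [hβmdef]
    ring
  have hdv : d = βt - βh := by funext j; simp [hd]
  have hlinc : ∀ i, Xr.mulVec βm i = (Xr.mulVec βt i + Xr.mulVec βh i) / 2 := by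
    intro i
    rw [hβmv, Matrix.mulVec_smul, Matrix.mulVec_add]
    simp
    ring
  have hlind : ∀ i, Xr.mulVec d i = Xr.mulVec βt i - Xr.mulVec βh i := by
    intro i
    rw [hdv, Matrix.mulVec_sub]
    simp
  have hid : (-2 * Real.log (βt rm1) + -2 * Real.log (βh rm1) - 2 * (-2 * Real.log (βm rm1)))
      + ((1/(n:ℝ)) * ∑ i : Fin n, (Xr.mulVec βt i)^2
          + (1/(n:ℝ)) * ∑ i : Fin n, (Xr.mulVec βh i)^2
          - 2 * ((1/(n:ℝ)) * ∑ i : Fin n, (Xr.mulVec βm i)^2))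
      + lam * (∑ ℓ ∈ Finset.range (r-1), (‖V βt ℓ‖ + ‖V βh ℓ‖ - 2 * ‖V βm ℓ‖))
      = F βt + F βh - 2 * F βm := by
    have hsplit : ∑ ℓ ∈ Finset.range (r-1), (‖V βt ℓ‖ + ‖V βh ℓ‖ - 2 * ‖V βm ℓ‖)
        = ∑ ℓ ∈ Finset.range (r-1), ‖V βt ℓ‖ + ∑ ℓ ∈ Finset.range (r-1), ‖V βh ℓ‖
          - 2 * ∑ ℓ ∈ Finset.range (r-1), ‖V βm ℓ‖ := by
      rw [Finset.sum_sub_distrib]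
      rw [Finset.sum_add_distrib]
      rw [← Finset.mul_sum]
    rw [hsplit, hF' βt, hF' βh, hF' βm]
    ring
  have htot : F βt + F βh - 2 * F βm ≤ 0 := by linarith
  have hSA : 0 ≤ -2 * Real.log (βt rm1) + -2 * Real.log (βh rm1)
      - 2 * (-2 * Real.log (βm rm1)) := by
    have := logAM hβt hβpos
    rw [hβmr]; linarith
  have hSq : ∑ i : Fin n, (Xr.mulVec βt i)^2 + ∑ i : Fin n, (Xr.mulVec βh i)^2
      - 2 * ∑ i : Fin n, (Xr.mulVec βm i)^2 = (1/2) * ∑ i : Fin n, (Xr.mulVec d i)^2 := by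
    rw [Finset.mul_sum, Finset.mul_sum, ← Finset.sum_add_distrib, ← Finset.sum_sub_distrib]
    exact Finset.sum_congr rfl fun i _ => by rw [hlinc i, hlind i]; ring
  have hSB : (1/(n:ℝ)) * ∑ i : Fin n, (Xr.mulVec βt i)^2
      + (1/(n:ℝ)) * ∑ i : Fin n, (Xr.mulVec βh i)^2
      - 2 * ((1/(n:ℝ)) * ∑ i : Fin n, (Xr.mulVec βm i)^2)
      = (1/(n:ℝ)) * ((1/2) * ∑ i : Fin n, (Xr.mulVec d i)^2) := by
    rw [← hSq]; ring
  rw [hSB] at hid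
  have hSBnn : 0 ≤ (1/(n:ℝ)) * ((1/2) * ∑ i : Fin n, (Xr.mulVec d i)^2) := by positivity
  have hCsum_nn : 0 ≤ ∑ ℓ ∈ Finset.range (r-1), (‖V βt ℓ‖ + ‖V βh ℓ‖ - 2 * ‖V βm ℓ‖) :=
    Finset.sum_nonneg fun ℓ _ => hCnonneg ℓ
  have hlamC : 0 ≤ lam * ∑ ℓ ∈ Finset.range (r-1), (‖V βt ℓ‖ + ‖V βh ℓ‖ - 2 * ‖V βm ℓ‖) :=
    mul_nonneg hlam.le hCsum_nn
  have hSA0 : -2 * Real.log (βt rm1) + -2 * Real.log (βh rm1)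
      - 2 * (-2 * Real.log (βm rm1)) = 0 := by linarith
  have hSB0 : (1/(n:ℝ)) * ((1/2) * ∑ i : Fin n, (Xr.mulVec d i)^2) = 0 := by linarith
  have hC0sum : ∑ ℓ ∈ Finset.range (r-1), (‖V βt ℓ‖ + ‖V βh ℓ‖ - 2 * ‖V βm ℓ‖) = 0 := by
    have hle : lam * ∑ ℓ ∈ Finset.range (r-1), (‖V βt ℓ‖ + ‖V βh ℓ‖ - 2 * ‖V βm ℓ‖) ≤ 0 := by
      linarith
    have hS_le : ∑ ℓ ∈ Finset.range (r-1), (‖V βt ℓ‖ + ‖V βh ℓ‖ - 2 * ‖V βm ℓ‖) ≤ 0 := by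
      by_contra hpos
      push_neg at hpos
      nlinarith
    linarith
  have h_rm1 : βt rm1 = βh rm1 := by
    by_contra hne
    have := logAM_strict hβt hβpos hne
    rw [hβmr] at hSA0
    linarith
  have hsq0 : ∑ i : Fin n, (Xr.mulVec d i)^2 = 0 := by
    rcases Nat.eq_zero_or_pos n with hn | hn
    · subst hn; simp
    · rcases mul_eq_zero.mp hSB0 with h | h
      · exact absurd h (by positivity)
      · rcases mul_eq_zero.mp h with h' | h'
        · norm_num at h'
        · exact h'
  have hXd : Xr.mulVec d = 0 := by
    funext i
    have h1 := (Finset.sum_eq_zero_iff_of_nonneg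
      (fun i _ => sq_nonneg (Xr.mulVec d i))).mp hsq0 i (Finset.mem_univ i)
    simpa using pow_eq_zero_iff (two_ne_zero) |>.mp h1
  have hC0 : ∀ ℓ ∈ Finset.range (r-1), ‖V βt ℓ‖ + ‖V βh ℓ‖ - 2 * ‖V βm ℓ‖ = 0 :=
    fun ℓ hℓ => (Finset.sum_eq_zero_iff_of_nonneg (fun ℓ _ => hCnonneg ℓ)).mp hC0sum ℓ hℓ
  have hmveq : Xr.mulVec βt = Xr.mulVec βh := by
    funext i
    have h1 := congrFun hXd i
    have h2 := hlind i
    simp only [Pi.zero_apply] at h1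
    rw [h1] at h2
    linarith
  have hPen : ∑ ℓ ∈ Finset.range (r-1), ‖V βt ℓ‖ = ∑ ℓ ∈ Finset.range (r-1), ‖V βh ℓ‖ := by
    have h1 := hFeq
    rw [hF' βt, hF' βh, h_rm1, hmveq] at h1
    have h2 : lam * ∑ ℓ ∈ Finset.range (r-1), ‖V βt ℓ‖
        = lam * ∑ ℓ ∈ Finset.range (r-1), ‖V βh ℓ‖ := by linarith
    exact mul_left_cancel₀ hlam.ne' h2
  -- Step C: stationarity dotted with d
  have hdrm1 : d rm1 = 0 := by simp [hd, h_rm1]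
  have hdot0 : ∑ j : Fin r,
      (-(2 / βh rm1) * (if j = rm1 then 1 else 0)
        + (2 / (n : ℝ)) * ((Xrᵀ * Xr).mulVec βh j)
        + lam * ∑ ℓ ∈ Finset.range (r - 1),
            (if (j : ℕ) ≤ ℓ then w ℓ (j : ℕ) else 0) * a ℓ j) * d j = 0 :=
    Finset.sum_eq_zero fun j _ => by rw [hstat j, zero_mul]
  have hT1 : ∑ j : Fin r, (-(2 / βh rm1) * (if j = rm1 then 1 else 0)) * d j = 0 := by
    have h1 : ∀ j : Fin r, (-(2 / βh rm1) * (if j = rm1 then 1 else 0)) * d j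
        = if j = rm1 then -(2 / βh rm1) * d j else 0 := by
      intro j; by_cases h : j = rm1 <;> simp [h]
    rw [Finset.sum_congr rfl fun j _ => h1 j, Finset.sum_ite_eq' Finset.univ rm1]
    simp [hdrm1]
  have hT2 : ∑ j : Fin r, ((2 / (n : ℝ)) * ((Xrᵀ * Xr).mulVec βh j)) * d j = 0 := by
    have h1 : ∑ j : Fin r, ((2 / (n : ℝ)) * ((Xrᵀ * Xr).mulVec βh j)) * d j
        = (2 / (n : ℝ)) * (((Xrᵀ * Xr).mulVec βh) ⬝ᵥ d) := by
      have e1 : ((Xrᵀ * Xr).mulVec βh) ⬝ᵥ d = ∑ j : Fin r, ((Xrᵀ * Xr).mulVec βh j) * d j := rfl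
      rw [e1, Finset.mul_sum]
      exact Finset.sum_congr rfl fun j _ => by ring
    rw [h1]
    have h2 : ((Xrᵀ * Xr).mulVec βh) ⬝ᵥ d = (Xr.mulVec βh) ⬝ᵥ (Xr.mulVec d) := by
      rw [← Matrix.mulVec_mulVec, Matrix.mulVec_transpose, Matrix.dotProduct_mulVec]
    rw [h2, hXd, dotProduct_zero, mul_zero]
  have hT3 : ∑ j : Fin r, (lam * ∑ ℓ ∈ Finset.range (r - 1),
      (if (j : ℕ) ≤ ℓ then w ℓ (j : ℕ) else 0) * a ℓ j) * d j
      = lam * ∑ ℓ ∈ Finset.range (r - 1), ⟪A' ℓ, V d ℓ⟫_ℝ := by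
    have h1 : ∀ j : Fin r, (lam * ∑ ℓ ∈ Finset.range (r - 1),
        (if (j : ℕ) ≤ ℓ then w ℓ (j : ℕ) else 0) * a ℓ j) * d j
        = lam * ∑ ℓ ∈ Finset.range (r - 1),
            ((if (j : ℕ) ≤ ℓ then w ℓ (j : ℕ) else 0) * a ℓ j * d j) := by
      intro j
      rw [mul_assoc, Finset.sum_mul]
    rw [Finset.sum_congr rfl fun j _ => h1 j, ← Finset.mul_sum, Finset.sum_comm]
    congr 1
    refine Finset.sum_congr rfl fun ℓ _ => ?_
    rw [hinner]
    refine Finset.sum_congr rfl fun m _ => ?_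
    by_cases h : (m : ℕ) ≤ ℓ
    · simp [hA', hV, h]; ring
    · simp [hA', hV, h]
  have hkey0 : ∑ ℓ ∈ Finset.range (r - 1), ⟪A' ℓ, V d ℓ⟫_ℝ = 0 := by
    simp only [add_mul] at hdot0
    rw [Finset.sum_add_distrib, Finset.sum_add_distrib] at hdot0
    have h0 : lam * ∑ ℓ ∈ Finset.range (r - 1), ⟪A' ℓ, V d ℓ⟫_ℝ = 0 := by
      rw [← hT3]; linarith
    rcases mul_eq_zero.mp h0 with h | h
    · exact absurd h hlam.ne'
    · exact h
  have hVd : ∀ ℓ : ℕ, V d ℓ = V βt ℓ - V βh ℓ := by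
    intro ℓ; ext m
    have h0 : (V βt ℓ - V βh ℓ) m = V βt ℓ m - V βh ℓ m := rfl
    rw [h0]
    by_cases h : (m : ℕ) ≤ ℓ
    · simp [hV, h, hd]; ring
    · simp [hV, h, hd]
  have hkey : ∑ ℓ ∈ Finset.range (r - 1), ⟪A' ℓ, V βt ℓ⟫_ℝ
      = ∑ ℓ ∈ Finset.range (r - 1), ⟪A' ℓ, V βh ℓ⟫_ℝ := by
    have h1 : ∀ ℓ : ℕ, ⟪A' ℓ, V d ℓ⟫_ℝ = ⟪A' ℓ, V βt ℓ⟫_ℝ - ⟪A' ℓ, V βh ℓ⟫_ℝ := by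
      intro ℓ; rw [hVd ℓ, inner_sub_right]
    rw [Finset.sum_congr rfl fun ℓ _ => h1 ℓ, Finset.sum_sub_distrib] at hkey0
    linarith
  -- dual vectors on nonzero groups
  have hApar : ∀ ℓ, ℓ < r - 1 → (¬ ∀ m : Fin r, (m : ℕ) ≤ ℓ → βh m = 0) →
      0 < ‖V βh ℓ‖ ∧ A' ℓ = ‖V βh ℓ‖⁻¹ • V βh ℓ := by
    intro ℓ hℓ hz
    have hz' := hz
    push_neg at hz'
    obtain ⟨m0, hm0le, hm0ne⟩ := hz'
    have hne : V βh ℓ ≠ 0 := by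
      intro h0
      have hc : V βh ℓ m0 = 0 := by rw [h0]; rfl
      have hc2 : w ℓ (m0 : ℕ) * βh m0 = 0 := by simpa [hV, hm0le] using hc
      rcases mul_eq_zero.mp hc2 with h | h
      · exact (hw ℓ (m0 : ℕ) hm0le hℓ).ne' h
      · exact hm0ne h
    have hpos : 0 < ‖V βh ℓ‖ := norm_pos_iff.mpr hne
    refine ⟨hpos, ?_⟩
    ext m
    have h0 : (‖V βh ℓ‖⁻¹ • V βh ℓ) m = ‖V βh ℓ‖⁻¹ * V βh ℓ m := rfl
    rw [h0]
    by_cases h : (m : ℕ) ≤ ℓ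
    · have hg := hagrad ℓ hℓ hz m h
      rw [hVnorm βh ℓ] at hg
      have hAm : A' ℓ m = a ℓ m := by simp [hA', h]
      rw [hAm, hg]
      simp [hV, h]
      ring
    · simp [hA', hV, h]
  have hAh : ∀ ℓ ∈ Finset.range (r-1), ⟪A' ℓ, V βh ℓ⟫_ℝ = ‖V βh ℓ‖ := by
    intro ℓ hℓr
    have hℓ := Finset.mem_range.mp hℓr
    by_cases hz : ∀ m : Fin r, (m : ℕ) ≤ ℓ → βh m = 0
    · have h0 : V βh ℓ = 0 := by
        ext m
        by_cases h : (m : ℕ) ≤ ℓ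
        · simp [hV, h, hz m h]
        · simp [hV, h]
      rw [h0, inner_zero_right, norm_zero]
    · obtain ⟨hpos, hA⟩ := hApar ℓ hℓ hz
      rw [hA, real_inner_smul_left, real_inner_self_eq_norm_sq, sq,
        inv_mul_cancel_left₀ hpos.ne']
  have hA1 : ∀ ℓ, ℓ < r - 1 → ‖A' ℓ‖ ≤ 1 := by
    intro ℓ hℓ
    by_cases hz : ∀ m : Fin r, (m : ℕ) ≤ ℓ → βh m = 0
    · rw [← hA'norm ℓ]; exact hafeas ℓ hℓ hz
    · obtain ⟨hpos, hA⟩ := hApar ℓ hℓ hz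
      rw [hA, norm_smul, norm_inv, norm_norm, inv_mul_cancel₀ hpos.ne']
  have hterm_nonneg : ∀ ℓ ∈ Finset.range (r-1), 0 ≤ ‖V βt ℓ‖ - ⟪A' ℓ, V βt ℓ⟫_ℝ := by
    intro ℓ hℓr
    have h1 := real_inner_le_norm (A' ℓ) (V βt ℓ)
    have h2 := hA1 ℓ (Finset.mem_range.mp hℓr)
    nlinarith [norm_nonneg (V βt ℓ), norm_nonneg (A' ℓ)]
  have htermsum : ∑ ℓ ∈ Finset.range (r-1), (‖V βt ℓ‖ - ⟪A' ℓ, V βt ℓ⟫_ℝ) = 0 := by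
    rw [Finset.sum_sub_distrib, hPen, hkey, Finset.sum_congr rfl hAh]
    exact sub_self _
  have htermeq : ∀ ℓ ∈ Finset.range (r-1), ⟪A' ℓ, V βt ℓ⟫_ℝ = ‖V βt ℓ‖ := by
    intro ℓ hℓ
    have h1 := (Finset.sum_eq_zero_iff_of_nonneg hterm_nonneg).mp htermsum ℓ hℓ
    linarith
  -- strict feasibility kills the leading zero block of βt
  have hbt0 : ∀ m : Fin r, (m : ℕ) < J → βt m = 0 := by
    intro m hm
    have hJ1 : J - 1 < J := by omega
    have hℓ : J - 1 < r - 1 := by omega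
    have hAlt : ‖A' (J-1)‖ < 1 := by rw [← hA'norm (J-1)]; exact hstrict (J-1) hJ1
    have heq := htermeq (J-1) (Finset.mem_range.mpr hℓ)
    have hV0 : V βt (J-1) = 0 := by
      by_contra hne
      have hpos : 0 < ‖V βt (J-1)‖ := norm_pos_iff.mpr hne
      have h1 := real_inner_le_norm (A' (J-1)) (V βt (J-1))
      nlinarith
    have hmle : (m : ℕ) ≤ J - 1 := by omega
    have hcomp : V βt (J-1) m = 0 := by rw [hV0]; rfl
    have hc2 : w (J-1) (m : ℕ) * βt m = 0 := by simpa [hV, hmle] using hcomp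
    rcases mul_eq_zero.mp hc2 with h | h
    · exact absurd h (hw (J-1) (m : ℕ) hmle hℓ).ne'
    · exact h
  -- conclusion
  rcases lt_or_eq_of_le hJle with hJlt | hJeq
  · -- J < r - 1 : use parallelism on the top group and full column rank
    have hbJ : βh ⟨J, by omega⟩ ≠ 0 := hJmax hJlt
    have hℓ0 : r - 2 < r - 1 := by omega
    have hJℓ0 : J ≤ r - 2 := by omega
    have hvne : V βh (r-2) ≠ 0 := by
      intro h0
      have hc : V βh (r-2) ⟨J, by omega⟩ = 0 := by rw [h0]; rfl
      have hc2 : w (r-2) J * βh ⟨J, by omega⟩ = 0 := by simpa [hV, hJℓ0] using hc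
      rcases mul_eq_zero.mp hc2 with h | h
      · exact (hw (r-2) J hJℓ0 hℓ0).ne' h
      · exact hbJ h
    have hNpos : 0 < ‖V βh (r-2)‖ := norm_pos_iff.mpr hvne
    have hCℓ0 := hC0 (r-2) (Finset.mem_range.mpr hℓ0)
    have htri : ‖V βt (r-2) + V βh (r-2)‖ = ‖V βt (r-2)‖ + ‖V βh (r-2)‖ := by
      rw [hVmid (r-2), norm_smul] at hCℓ0
      rw [show ‖(2⁻¹:ℝ)‖ = 2⁻¹ by simp [Real.norm_eq_abs]] at hCℓ0
      have h1 := norm_add_le (V βt (r-2)) (V βh (r-2))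
      linarith
    have hinner_eq : ⟪V βt (r-2), V βh (r-2)⟫_ℝ = ‖V βt (r-2)‖ * ‖V βh (r-2)‖ := by
      have h1 := norm_add_sq_real (V βt (r-2)) (V βh (r-2))
      rw [htri] at h1
      nlinarith
    have hpar := inner_eq_norm_mul_iff_real.mp hinner_eq
    have hc : ∀ m : Fin r, (m : ℕ) ≤ r - 2 →
        βt m = (‖V βt (r-2)‖ / ‖V βh (r-2)‖) * βh m := by
      intro m hm
      have h1 : ‖V βh (r-2)‖ * V βt (r-2) m = ‖V βt (r-2)‖ * V βh (r-2) m := by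
        have h2 := congrArg (fun v : EuclideanSpace ℝ (Fin r) => v m) hpar
        exact h2
      have hwpos := hw (r-2) (m : ℕ) hm hℓ0
      simp only [hV] at h1
      rw [if_pos hm, if_pos hm] at h1
      have h3 : w (r-2) (m:ℕ) * (‖V βh (r-2)‖ * βt m)
          = w (r-2) (m:ℕ) * (‖V βt (r-2)‖ * βh m) := by linear_combination h1
      have h4 := mul_left_cancel₀ hwpos.ne' h3
      field_simp
      linear_combination h4
    have hdsupp : ∀ j : Fin r, βh j = 0 → d j = 0 := by
      intro j hj
      by_cases hjr : (j : ℕ) ≤ r - 2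
      · simp [hd, hc j hjr, hj]
      · have hj1 : j = rm1 := by
          apply Fin.ext
          have := j.isLt
          show (j : ℕ) = r - 1
          omega
        rw [hj1]
        exact hdrm1
    have hcomb : ∑ j : {j : Fin r // βh j ≠ 0},
        (fun j : {j : Fin r // βh j ≠ 0} => d j.1) j • (fun i : Fin n => Xr i j.1) = 0 := by
      funext i
      rw [Finset.sum_apply]
      have h1 : ∀ j : {j : Fin r // βh j ≠ 0},
          ((fun j : {j : Fin r // βh j ≠ 0} => d j.1) j • (fun i : Fin n => Xr i j.1)) i
            = d j.1 * Xr i j.1 := fun j => rfl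
      rw [Finset.sum_congr rfl fun j _ => h1 j]
      have h2 : ∑ j : {j : Fin r // βh j ≠ 0}, d j.1 * Xr i j.1
          = ∑ j ∈ Finset.univ.filter (fun j : Fin r => βh j ≠ 0), d j * Xr i j :=
        (Finset.sum_subtype (p := fun j : Fin r => βh j ≠ 0)
          (Finset.univ.filter (fun j : Fin r => βh j ≠ 0)) (fun x => by simp)
          (fun j => d j * Xr i j)).symm
      have h3 : ∑ j ∈ Finset.univ.filter (fun j : Fin r => βh j ≠ 0), d j * Xr i j
          = ∑ j : Fin r, d j * Xr i j := by
        apply Finset.sum_subset (Finset.filter_subset _ _)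
        intro j _ hj
        simp only [Finset.mem_filter, Finset.mem_univ, true_and, not_not] at hj
        rw [hdsupp j hj, zero_mul]
      have h4 : ∑ j : Fin r, d j * Xr i j = Xr.mulVec d i := by
        simp [Matrix.mulVec, dotProduct, mul_comm]
      rw [h2, h3, h4, hXd]
    have hall := Fintype.linearIndependent_iff.mp hrank (fun j => d j.1) hcomb
    funext j
    have hdj : d j = 0 := by
      by_cases hj : βh j = 0
      · exact hdsupp j hj
      · exact hall ⟨j, hj⟩
    have h5 : βt j - βh j = 0 := hdj
    linarith
  · -- J = r - 1
    funext j
    by_cases hj : (j : ℕ) < r - 1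
    · rw [hbt0 j (by omega), hJzero j (by omega)]
    · have hj1 : j = rm1 := by
        apply Fin.ext
        have := j.isLt
        show (j : ℕ) = r - 1
        omega
      rw [hj1]
      exact h_rm1
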